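/- If X is a finite set and R is a left Noetherian associative ring with unit, then the polynomial diring Di_R[X] is left Noetherian: every ascending chain of left ideals of Di_R[X] stabilizes. -/

import Mathlib

namespace NCHilbert


open Polynomial

variable {R : Type*} [Ring R]

theorem mem_leadingCoeffNth' (I : Ideal R[X]) (n : ℕ) (x) :
    x ∈ I.leadingCoeffNth n ↔ ∃ p ∈ I, degree p ≤ n ∧ p.leadingCoeff = x := by
  simp only [Ideal.leadingCoeffNth, Ideal.degreeLE, Submodule.mem_map, lcoeff_apply,
    Submodule.mem_inf, mem_degreeLE]
  constructor
  · rintro ⟨p, ⟨hpdeg, hpI⟩, rfl⟩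
    rcases lt_or_eq_of_le hpdeg with hpdeg | hpdeg
    · refine ⟨0, I.zero_mem, bot_le, ?_⟩
      rw [leadingCoeff_zero, eq_comm]
      exact coeff_eq_zero_of_degree_lt hpdeg
    · refine ⟨p, hpI, le_of_eq hpdeg, ?_⟩
      rw [Polynomial.leadingCoeff, natDegree, hpdeg, Nat.cast_withBot, WithBot.unbotD_coe]
  · rintro ⟨p, hpI, hpdeg, rfl⟩
    have : natDegree p + (n - natDegree p) = n :=
      add_tsub_cancel_of_le (natDegree_le_of_degree_le hpdeg)
    refine ⟨p * X ^ (n - natDegree p), ⟨?_, ?_⟩, ?_⟩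
    · apply le_trans (degree_mul_le _ _) _
      apply le_trans (add_le_add degree_le_natDegree (degree_X_pow_le _)) _
      rw [← Nat.cast_add, this]
    · rw [← X_pow_mul]
      exact I.mul_mem_left _ hpI
    · rw [Polynomial.leadingCoeff, ← coeff_mul_X_pow p (n - natDegree p), this]

theorem leadingCoeffNth_mono' (I : Ideal R[X]) {m n : ℕ} (H : m ≤ n) :
    I.leadingCoeffNth m ≤ I.leadingCoeffNth n := by
  intro r hr
  simp only [SetLike.mem_coe, mem_leadingCoeffNth'] at hr ⊢
  rcases hr with ⟨p, hpI, hpdeg, rfl⟩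
  refine ⟨p * X ^ (n - m), by rw [← X_pow_mul]; exact I.mul_mem_left _ hpI, ?_,
    leadingCoeff_mul_X_pow⟩
  refine le_trans (degree_mul_le _ _) ?_
  refine le_trans (add_le_add hpdeg (degree_X_pow_le _)) ?_
  rw [← Nat.cast_add, add_tsub_cancel_of_le H]

theorem is_fg_degreeLE' [IsNoetherianRing R] (I : Ideal R[X]) (n : ℕ) :
    Submodule.FG (I.degreeLE n) :=
  letI := Classical.decEq R
  isNoetherian_submodule_left.1
    (isNoetherian_of_fg_of_noetherian _ ⟨_, degreeLE_eq_span_X_pow.symm⟩) _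

set_option maxHeartbeats 1000000 in
/-- Hilbert basis theorem for noncommutative (left Noetherian) rings. -/
protected theorem isNoetherianRing [inst : IsNoetherianRing R] : IsNoetherianRing R[X] :=
  isNoetherianRing_iff.2
    ⟨fun I : Ideal R[X] =>
      let M := inst.wf.min (Set.range I.leadingCoeffNth) ⟨_, ⟨0, rfl⟩⟩
      have hm : M ∈ Set.range I.leadingCoeffNth := WellFounded.min_mem _ _ _
      let ⟨N, HN⟩ := hm
      let ⟨s, hs⟩ := is_fg_degreeLE' I N
      have hm2 : ∀ k, I.leadingCoeffNth k ≤ M := fun k =>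
        Or.casesOn (le_or_gt k N) (fun h => HN ▸ leadingCoeffNth_mono' I h) fun h _ hx =>
          Classical.by_contradiction fun hxm =>
            haveI : IsNoetherian R R := inst
            have : ¬M < I.leadingCoeffNth k := by
              exact WellFounded.not_lt_min inst.wf (Set.range I.leadingCoeffNth) (Set.mem_range_self k)
            this ⟨HN ▸ leadingCoeffNth_mono' I (le_of_lt h), fun H => hxm (H hx)⟩
      have hs2 : ∀ {x}, x ∈ I.degreeLE N → x ∈ Ideal.span (↑s : Set R[X]) :=
        hs ▸ fun hx =>
          Submodule.span_induction (hx := hx) (fun _ hx => Ideal.subset_span hx) (Ideal.zero_mem _)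
            (fun _ _ _ _ => Ideal.add_mem _) fun c f _ hf => f.C_mul' c ▸ Ideal.mul_mem_left _ _ hf
      ⟨s, le_antisymm (Ideal.span_le.2 fun x hx =>
          have : x ∈ I.degreeLE N := hs ▸ Submodule.subset_span hx
          this.2) <| by
        have : Submodule.span R[X] ↑s = Ideal.span ↑s := rfl
        rw [this]
        intro p hp
        generalize hn : p.natDegree = k
        induction' k using Nat.strong_induction_on with k ih generalizing p
        rcases le_or_gt k N with h | h
        · subst k
          refine hs2 ⟨Polynomial.mem_degreeLE.2
            (le_trans Polynomial.degree_le_natDegree <| WithBot.coe_le_coe.2 h), hp⟩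
        · have hp0 : p ≠ 0 := by
            rintro rfl
            cases hn
            exact Nat.not_lt_zero _ h
          have : (0 : R) ≠ 1 := by
            intro h
            apply hp0
            ext i
            refine (mul_one _).symm.trans ?_
            rw [← h, mul_zero]
            rfl
          haveI : Nontrivial R := ⟨⟨0, 1, this⟩⟩
          have : p.leadingCoeff ∈ I.leadingCoeffNth N := by
            rw [HN]
            exact hm2 k ((mem_leadingCoeffNth' I _ _).2
              ⟨_, hp, hn ▸ Polynomial.degree_le_natDegree, rfl⟩)
          rw [mem_leadingCoeffNth' I] at this
          rcases this with ⟨q, hq, hdq, hlqp⟩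
          have hq0 : q ≠ 0 := by
            intro H
            rw [← Polynomial.leadingCoeff_eq_zero] at H
            rw [hlqp, Polynomial.leadingCoeff_eq_zero] at H
            exact hp0 H
          have h1 : p.degree = (q * Polynomial.X ^ (k - q.natDegree)).degree := by
            rw [Polynomial.degree_mul', Polynomial.degree_X_pow]
            · rw [Polynomial.degree_eq_natDegree hp0, Polynomial.degree_eq_natDegree hq0]
              rw [← Nat.cast_add, add_tsub_cancel_of_le, hn]
              · refine le_trans (Polynomial.natDegree_le_of_degree_le hdq) (le_of_lt h)
            rw [Polynomial.leadingCoeff_X_pow, mul_one]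
            exact mt Polynomial.leadingCoeff_eq_zero.1 hq0
          have h2 : p.leadingCoeff = (q * Polynomial.X ^ (k - q.natDegree)).leadingCoeff := by
            rw [← hlqp, Polynomial.leadingCoeff_mul_X_pow]
          have := Polynomial.degree_sub_lt h1 hp0 h2
          rw [Polynomial.degree_eq_natDegree hp0] at this
          rw [← sub_add_cancel p (q * Polynomial.X ^ (k - q.natDegree))]
          have hqX : q * Polynomial.X ^ (k - q.natDegree) ∈ I := by
            rw [← X_pow_mul]; exact I.mul_mem_left _ hq
          have hqXs : q * Polynomial.X ^ (k - q.natDegree) ∈ Ideal.span (↑s : Set R[X]) := by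
            rw [← X_pow_mul]
            exact Ideal.mul_mem_left _ _ (hs2 ⟨Polynomial.mem_degreeLE.2 hdq, hq⟩)
          refine Submodule.add_mem _ ?_ hqXs
          by_cases hpq : p - q * Polynomial.X ^ (k - q.natDegree) = 0
          · rw [hpq]
            exact Ideal.zero_mem _
          refine ih _ ?_ (I.sub_mem hp hqX) rfl
          rwa [Polynomial.degree_eq_natDegree hpq, Nat.cast_lt, hn] at this⟩⟩



open Polynomial

variable {R : Type*} [Ring R]


section Curry

open Finsupp

variable {M N : Type*} [AddMonoid M] [AddMonoid N]

/-- Currying as an `AddEquiv`. -/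
noncomputable def curryAddEquiv :
    AddMonoidAlgebra R (M × N) ≃+ AddMonoidAlgebra (AddMonoidAlgebra R M) N :=
  ((AddMonoidAlgebra.domCongr ℕ R (AddEquiv.prodComm (M := M) (N := N))).toRingEquiv.trans
    (AddMonoidAlgebra.curryRingEquiv (R := R) (M := N) (N := M))).toAddEquiv

theorem curryAddEquiv_apply (f : AddMonoidAlgebra R (M × N)) (n : N) (m : M) :
    ((curryAddEquiv f : AddMonoidAlgebra (AddMonoidAlgebra R M) N).coeff n).coeff m
      = f.coeff (m, n) := by
  induction f using AddMonoidAlgebra.induction_linear with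
  | zero => simp
  | add x y hx hy => simp [map_add, AddMonoidAlgebra.coeff_add, hx, hy]
  | single p a =>
    obtain ⟨m', n'⟩ := p
    simp [curryAddEquiv, AddMonoidAlgebra.coeff_single, Finsupp.single_apply, Prod.ext_iff]
    by_cases h1 : n' = n <;> by_cases h2 : m' = m <;> simp [h1, h2]

theorem curryAddEquiv_single (m : M) (n : N) (a : R) :
    (curryAddEquiv (AddMonoidAlgebra.single ((m, n) : M × N) a) :
      AddMonoidAlgebra (AddMonoidAlgebra R M) N)
        = AddMonoidAlgebra.single n (AddMonoidAlgebra.single m a) := by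
  simp [curryAddEquiv]

theorem curryAddEquiv_mul (f g : AddMonoidAlgebra R (M × N)) :
    (curryAddEquiv (f * g) : AddMonoidAlgebra (AddMonoidAlgebra R M) N) =
      curryAddEquiv f * curryAddEquiv g :=
  map_mul ((AddMonoidAlgebra.domCongr ℕ R (AddEquiv.prodComm (M := M) (N := N))).toRingEquiv.trans
    (AddMonoidAlgebra.curryRingEquiv (R := R) (M := N) (N := M))) f g

/-- Currying as a ring equivalence. -/
noncomputable def curryRingEquiv :
    AddMonoidAlgebra R (M × N) ≃+* AddMonoidAlgebra (AddMonoidAlgebra R M) N :=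
  { (curryAddEquiv : AddMonoidAlgebra R (M × N) ≃+ _) with
    map_mul' := curryAddEquiv_mul }

/-- The monoid algebra over a trivial monoid is the base ring. -/
noncomputable def uniqueRingEquiv (M : Type*) [AddMonoid M] [Unique M] :
    AddMonoidAlgebra R M ≃+* R :=
  AddMonoidAlgebra.uniqueRingEquiv (R := R) M

/-- Transfer Noetherianity along an additive equivalence of exponent monoids. -/
theorem noeth_of_addEquiv {G H : Type*} [AddMonoid G] [AddMonoid H] (e : G ≃+ H)
    (h : IsNoetherianRing (AddMonoidAlgebra R G)) : IsNoetherianRing (AddMonoidAlgebra R H) :=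
  isNoetherianRing_of_ringEquiv _ (AddMonoidAlgebra.domCongr ℕ R e).toRingEquiv

/-- `(Fin n → ℕ) × ℕ ≃+ (Fin (n+1) → ℕ)` by `Fin.snoc`. -/
def snocAddEquiv (n : ℕ) : ((Fin n → ℕ) × ℕ) ≃+ (Fin (n + 1) → ℕ) where
  toFun p := Fin.snoc p.1 p.2
  invFun f := (f ∘ Fin.castSucc, f (Fin.last n))
  left_inv p := by
    refine Prod.ext ?_ ?_
    · funext i; simp [Fin.snoc_castSucc]
    · simp
  right_inv f := by
    funext i
    refine Fin.lastCases ?_ ?_ i <;> simp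
  map_add' p q := by
    funext i
    refine Fin.lastCases ?_ ?_ i <;> simp

theorem noeth_pi [IsNoetherianRing R] :
    ∀ n, IsNoetherianRing (AddMonoidAlgebra R (Fin n → ℕ))
  | 0 => isNoetherianRing_of_ringEquiv R (uniqueRingEquiv (Fin 0 → ℕ)).symm
  | (n + 1) => by
    haveI h0 : IsNoetherianRing (AddMonoidAlgebra R (Fin n → ℕ)) := noeth_pi n
    haveI h1 : IsNoetherianRing (Polynomial (AddMonoidAlgebra R (Fin n → ℕ))) :=
      NCHilbert.isNoetherianRing
    haveI h2 : IsNoetherianRing (AddMonoidAlgebra (AddMonoidAlgebra R (Fin n → ℕ)) ℕ) :=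
      isNoetherianRing_of_ringEquiv _ (Polynomial.toFinsuppIso _)
    haveI h3 : IsNoetherianRing (AddMonoidAlgebra R ((Fin n → ℕ) × ℕ)) :=
      isNoetherianRing_of_ringEquiv _ (curryRingEquiv (R := R)).symm
    exact noeth_of_addEquiv (snocAddEquiv n) h3

theorem noeth_multiset (Y : Type*) [Fintype Y] [IsNoetherianRing R] :
    IsNoetherianRing (AddMonoidAlgebra R (Multiset Y)) := by
  classical
  have e1 : (Fin (Fintype.card Y) → ℕ) ≃+ Multiset Y := by
    refine AddEquiv.trans ?_ Multiset.toFinsupp.symm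
    refine AddEquiv.trans Finsupp.addEquivFunOnFinite.symm ?_
    exact Finsupp.domCongr (Fintype.equivFin Y).symm
  exact noeth_of_addEquiv e1 (noeth_pi _)

end Curry

end NCHilbert

namespace CDi

/-- A "diword": a basis element of the free commutative disemigroup `⌊X⁺⌋₁ ∪ ⌊XX⌋₂`:
a nonempty multiset (commutative word) together with a label `1`, or label `2`
when the word has length `2`. -/
def DiWord (X : Type*) :=
  {p : Multiset X × ℕ // p.1 ≠ 0 ∧ (p.2 = 1 ∨ (p.2 = 2 ∧ Multiset.card p.1 = 2))}

namespace DiWord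

variable {X : Type*}

def word (a : DiWord X) : Multiset X := a.1.1

def lbl (a : DiWord X) : ℕ := a.1.2

theorem word_ne (a : DiWord X) : a.word ≠ 0 := a.2.1

theorem add_word_ne (a b : DiWord X) : a.word + b.word ≠ 0 := by
  intro h
  have h1 := congrArg Multiset.card h
  simp only [Multiset.card_add, Multiset.card_zero] at h1
  have := a.word_ne
  rw [← Multiset.card_pos] at this
  omega

/-- The operation `⊣` on `Disgp[X]`: always produces label 1. -/
def pd (a b : DiWord X) : DiWord X :=
  ⟨(a.word + b.word, 1), add_word_ne a b, Or.inl rfl⟩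

/-- The operation `⊢` on `Disgp[X]`: produces label 2 exactly when both factors are
single letters (total length 2), label 1 otherwise. -/
def pv (a b : DiWord X) : DiWord X :=
  ⟨(a.word + b.word, if Multiset.card (a.word + b.word) = 2 then 2 else 1), by
    refine ⟨add_word_ne a b, ?_⟩
    split_ifs with h
    · exact Or.inr ⟨rfl, h⟩
    · exact Or.inl rfl⟩

/-- `⌊u⌋₁` for a nonempty commutative word `u`. -/
def m1 (u : Multiset X) (h : u ≠ 0) : DiWord X := ⟨(u, 1), h, Or.inl rfl⟩

/-- A single letter `x ∈ X`, i.e. `⌊x⌋₁`. -/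
def mX (x : X) : DiWord X := m1 {x} (by simp)

/-- `⌊xx'⌋₂`. -/
def m2 (x y : X) : DiWord X := ⟨({x, y}, 2), by simp, Or.inr ⟨rfl, by simp⟩⟩

end DiWord
/-- A monomial ordering on the free commutative semigroup `⌊X⁺⌋` (nonempty multisets
over `X`): a well-ordering compatible with multiplication. -/
structure MonOrd (X : Type*) where
  lt : Multiset X → Multiset X → Prop
  wf : WellFounded fun a b : {u : Multiset X // u ≠ 0} => lt a.1 b.1
  trans : ∀ u v w : Multiset X, u ≠ 0 → v ≠ 0 → w ≠ 0 → lt u v → lt v w → lt u w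
  total : ∀ u v : Multiset X, u ≠ 0 → v ≠ 0 → u ≠ v → lt u v ∨ lt v u
  compat : ∀ u v w : Multiset X, u ≠ 0 → v ≠ 0 → lt u v → lt (u + w) (v + w)

/-- The monomial-center ordering on `⌊X⁺⌋₁ ∪ ⌊XX⌋₂` induced by a monomial ordering:
compare the words first, then the labels. -/
def MonOrd.dlt {X : Type*} (o : MonOrd X) (a b : DiWord X) : Prop :=
  o.lt a.word b.word ∨ (a.word = b.word ∧ a.lbl < b.lbl)

def MonOrd.dle {X : Type*} (o : MonOrd X) (a b : DiWord X) : Prop :=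
  a = b ∨ o.dlt a b

variable {X k : Type*} [Ring k]

/-- The free commutative dialgebra `Di[X]` (polynomial diring over `k`): the free
`k`-module on the diwords. -/
abbrev Di (X k : Type*) [Ring k] := DiWord X →₀ k

/-- The basis diword `m` viewed as an element of `Di[X]`. -/
noncomputable def mono (m : DiWord X) : Di X k := Finsupp.single m 1

/-- The operation `⊣` on `Di[X]`, extended bilinearly. -/
noncomputable def pL (f g : Di X k) : Di X k :=
  f.sum fun u a => g.sum fun v b => Finsupp.single (DiWord.pd u v) (a * b)

/-- The operation `⊢` on `Di[X]`, extended bilinearly. -/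
noncomputable def pR (f g : Di X k) : Di X k :=
  f.sum fun u a => g.sum fun v b => Finsupp.single (DiWord.pv u v) (a * b)

/-- `m` is the leading monomial of `f` (w.r.t. the monomial-center ordering `o`). -/
def IsLM (o : MonOrd X) (f : Di X k) (m : DiWord X) : Prop :=
  m ∈ f.support ∧ ∀ u ∈ f.support, u ≠ m → o.dlt u m

/-- `f` is strong: the associative word of its leading monomial is strictly greater than
the associative word of every other monomial in its support (equivalently `f̃ > r̃_f`). -/
def IsStrong (o : MonOrd X) (f : Di X k) : Prop :=
  ∃ m, IsLM o f m ∧ ∀ u ∈ f.support, u ≠ m → o.lt u.word m.word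

/-- Normal `S`-polynomials: `s`, `s ⊢ x` (when `|s̃| = 1`), or `s ⊣ ⌊a⌋₁` (when `s` is strong). -/
def IsNormal (o : MonOrd X) (S : Set (Di X k)) (g : Di X k) : Prop :=
  g ∈ S ∨
    (∃ s ∈ S, ∃ x : X, (∃ m, IsLM o s m ∧ Multiset.card m.word = 1) ∧
      g = pR s (mono (DiWord.mX x))) ∨
    (∃ s ∈ S, ∃ a : Multiset X, ∃ ha : a ≠ 0, IsStrong o s ∧
      g = pL s (mono (DiWord.m1 a ha)))

/-- `m ∈ Irr(S)`: `m` is not the leading monomial of any normal `S`-polynomial. -/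
def Irr (o : MonOrd X) (S : Set (Di X k)) (m : DiWord X) : Prop :=
  ∀ g : Di X k, IsNormal o S g → ¬ IsLM o g m

/-- Every element of `S` is monic. -/
def MonicSet (o : MonOrd X) (S : Set (Di X k)) : Prop :=
  ∀ s ∈ S, ∃ m, IsLM o s m ∧ s m = 1

/-- `h` is trivial modulo `S`: `h` is a linear combination of normal `S`-polynomials whose
leading monomials are `≤` the leading monomial of `h`. -/
def TrivialMod (o : MonOrd X) (S : Set (Di X k)) (h : Di X k) : Prop :=
  ∃ (n : ℕ) (α : Fin n → k) (g : Fin n → Di X k),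
    (∀ i, IsNormal o S (g i)) ∧ h = ∑ i, α i • g i ∧
    ∀ i, α i ≠ 0 → ∀ mi mh, IsLM o (g i) mi → IsLM o h mh → o.dle mi mh

/-- The compositions of elements of a (monic) set `S`: multiplication, special, equal,
short intersection, equal multiplication and long intersection compositions. -/
def IsComp (o : MonOrd X) (S : Set (Di X k)) (h : Di X k) : Prop :=
  -- multiplication composition
  (∃ f ∈ S, ¬ IsStrong o f ∧ ∃ x : X,
      h = pR f (mono (DiWord.mX x)) ∨ h = pL f (mono (DiWord.mX x))) ∨
  -- special composition
  (∃ f ∈ S, IsStrong o f ∧ (∃ m, IsLM o f m ∧ 1 < Multiset.card m.word) ∧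
      (∃ u ∈ f.support, ∃ x : X, u = DiWord.mX x) ∧
      ∃ x : X, h = pR f (mono (DiWord.mX x)) - pL f (mono (DiWord.mX x))) ∨
  -- equal composition
  (∃ f ∈ S, ∃ g ∈ S, f ≠ g ∧ (∃ m, IsLM o f m ∧ IsLM o g m) ∧ h = f - g) ∨
  -- short intersection composition
  (∃ f ∈ S, ∃ g ∈ S, (∃ mf, IsLM o f mf ∧ Multiset.card mf.word = 2) ∧
      (∃ mg, IsLM o g mg ∧ Multiset.card mg.word = 1) ∧
      ∃ x : X, ∃ gx : Di X k,
        (gx = pR g (mono (DiWord.mX x)) ∨ (IsStrong o g ∧ gx = pL g (mono (DiWord.mX x)))) ∧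
        (∃ m, IsLM o f m ∧ IsLM o gx m) ∧ h = f - gx) ∨
  -- equal multiplication composition
  (∃ f ∈ S, ∃ g ∈ S, IsStrong o f ∧ IsStrong o g ∧
      ∃ mf mg, IsLM o f mf ∧ IsLM o g mg ∧
        3 < Multiset.card mf.word + Multiset.card mg.word ∧
        mf ≠ mg ∧ mf.word = mg.word ∧
        ∃ x : X, h = pL f (mono (DiWord.mX x)) - pL g (mono (DiWord.mX x))) ∨
  -- long intersection composition
  (∃ f ∈ S, ∃ g ∈ S, IsStrong o f ∧ IsStrong o g ∧
      ∃ mf mg, IsLM o f mf ∧ IsLM o g mg ∧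
        3 < Multiset.card mf.word + Multiset.card mg.word ∧
        mf ≠ mg ∧ mf.word ≠ mg.word ∧
        ∃ w a b : Multiset X,
          mf.word ≤ w ∧ mg.word ≤ w ∧ (∀ w', mf.word ≤ w' → mg.word ≤ w' → w ≤ w') ∧
          mf.word + a = w ∧ mg.word + b = w ∧
          Multiset.card w < Multiset.card mf.word + Multiset.card mg.word ∧
          ∃ hb : b ≠ 0,
            ((a = 0 ∧ h = f - pL g (mono (DiWord.m1 b hb))) ∨
              (∃ ha : a ≠ 0,
                h = pL f (mono (DiWord.m1 a ha)) - pL g (mono (DiWord.m1 b hb)))))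

/-- `S` is a Gröbner–Shirshov basis: `S` is monic and every composition is trivial mod `S`. -/
def IsGSB (o : MonOrd X) (S : Set (Di X k)) : Prop :=
  MonicSet o S ∧ ∀ h, IsComp o S h → TrivialMod o S h

/-- Membership in the (two-sided) ideal `Id(S)` of `Di[X]` generated by `S`. -/
inductive InIdeal (S : Set (Di X k)) : Di X k → Prop
  | mem {f} : f ∈ S → InIdeal S f
  | zero : InIdeal S 0
  | add {f g} : InIdeal S f → InIdeal S g → InIdeal S (f + g)
  | smul (c : k) {f} : InIdeal S f → InIdeal S (c • f)
  | pL_left (f) {g} : InIdeal S g → InIdeal S (pL f g)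
  | pL_right (f) {g} : InIdeal S g → InIdeal S (pL g f)
  | pR_left (f) {g} : InIdeal S g → InIdeal S (pR f g)
  | pR_right (f) {g} : InIdeal S g → InIdeal S (pR g f)

/-- `I` is an ideal of `Di[X]`. -/
def IsIdeal (I : Set (Di X k)) : Prop :=
  (0 : Di X k) ∈ I ∧ (∀ f g, f ∈ I → g ∈ I → f + g ∈ I) ∧
    (∀ (c : k) f, f ∈ I → c • f ∈ I) ∧
    ∀ f g, g ∈ I → pL f g ∈ I ∧ pL g f ∈ I ∧ pR f g ∈ I ∧ pR g f ∈ I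

/-- `Id(S)` as a `k`-submodule of `Di[X]`. -/
def idealSub (S : Set (Di X k)) : Submodule k (Di X k) where
  carrier := {f | InIdeal S f}
  add_mem' := fun hf hg => InIdeal.add hf hg
  zero_mem' := InIdeal.zero
  smul_mem' := fun c _ hf => InIdeal.smul c hf



section NoetherianAux

variable {Y R : Type*} [Ring R]

/-- Shift a diword by a commutative word (identity for the empty word). -/
noncomputable def shiftW (u : Multiset Y) (d : DiWord Y) : DiWord Y := by
  classical
  exact if h : u = 0 then d else
    ⟨(u + d.word, 1), by
      refine ⟨?_, Or.inl rfl⟩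
      intro hc
      apply d.word_ne
      have h1 := congrArg Multiset.card hc
      simp only [Multiset.card_add, Multiset.card_zero] at h1
      rw [← Multiset.card_eq_zero]
      omega⟩

theorem shiftW_zero : shiftW (0 : Multiset Y) = id := by
  funext d; simp [shiftW]

theorem shiftW_of_ne (u : Multiset Y) (hu : u ≠ 0) (d : DiWord Y) :
    shiftW u d = ⟨(u + d.word, 1), by
      refine ⟨?_, Or.inl rfl⟩
      intro hc
      apply d.word_ne
      have h1 := congrArg Multiset.card hc
      simp only [Multiset.card_add, Multiset.card_zero] at h1
      rw [← Multiset.card_eq_zero]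
      omega⟩ := by
  simp [shiftW, hu]
  rfl

theorem shiftW_add (u v : Multiset Y) :
    shiftW (u + v) = (shiftW u) ∘ (shiftW (Y := Y) v) := by
  funext d
  by_cases hu : u = 0
  · subst hu
    rw [zero_add, shiftW_zero, Function.comp_apply, id_eq]
  by_cases hv : v = 0
  · subst hv
    rw [add_zero, Function.comp_apply, shiftW_zero, id_eq]
  · have huv : u + v ≠ 0 := by
      intro hc
      have h1 := congrArg Multiset.card hc
      have h2 : u.card ≠ 0 := fun h => hu (Multiset.card_eq_zero.mp h)
      simp only [Multiset.card_add, Multiset.card_zero] at h1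
      omega
    simp only [Function.comp_apply, shiftW_of_ne _ huv, shiftW_of_ne _ hv, shiftW_of_ne _ hu]
    apply Subtype.ext
    have key : ∀ e : DiWord Y, (shiftW u e).1 = (u + e.word, 1) := fun e => by
      rw [shiftW_of_ne _ hu]
    refine Eq.trans ?_ (key _).symm
    show (u + v + d.word, 1) = (u + _, 1)
    rw [Prod.mk.injEq]
    exact ⟨add_assoc u v d.word, rfl⟩

/-- The shift action as a monoid homomorphism into additive endomorphisms. -/
noncomputable def shiftHom :
    Multiplicative (Multiset Y) →* AddMonoid.End (Di Y R) where
  toFun u := Finsupp.mapDomain.addMonoidHom (shiftW (Multiplicative.toAdd u))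
  map_one' := by
    show Finsupp.mapDomain.addMonoidHom (shiftW (0 : Multiset Y)) = _
    rw [shiftW_zero, Finsupp.mapDomain.addMonoidHom_id]
    rfl
  map_mul' u v := by
    show Finsupp.mapDomain.addMonoidHom
        (shiftW (Multiplicative.toAdd u + Multiplicative.toAdd v)) = _
    rw [shiftW_add, Finsupp.mapDomain.addMonoidHom_comp]
    rfl

/-- The action of the commutative semigroup algebra on `Di Y R`, as a ring hom into
additive endomorphisms. -/
noncomputable def rho :
    AddMonoidAlgebra R (Multiset Y) →+* AddMonoid.End (Di Y R) :=
  AddMonoidAlgebra.liftNCRingHom (Module.toAddMonoidEnd R (Di Y R)) shiftHom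
    (fun r u => AddMonoidHom.ext fun g =>
      (Finsupp.mapDomain_smul r g : Finsupp.mapDomain _ (r • g) = r • Finsupp.mapDomain _ g).symm)

noncomputable instance : SMul (AddMonoidAlgebra R (Multiset Y)) (Di Y R) :=
  ⟨fun s g => rho s g⟩

theorem salg_smul_def (s : AddMonoidAlgebra R (Multiset Y)) (g : Di Y R) :
    s • g = rho s g := rfl

noncomputable instance : MulAction (AddMonoidAlgebra R (Multiset Y)) (Di Y R) where
  one_smul g := by show rho 1 g = g; rw [map_one]; rfl
  mul_smul s t g := by show rho (s * t) g = rho s (rho t g); rw [map_mul]; rfl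

noncomputable instance : DistribMulAction (AddMonoidAlgebra R (Multiset Y)) (Di Y R) where
  smul_zero s := (rho s).map_zero
  smul_add s g h := (rho s).map_add g h

noncomputable instance salgModule : Module (AddMonoidAlgebra R (Multiset Y)) (Di Y R) where
  add_smul s t g := by show rho (s + t) g = _; rw [map_add]; rfl
  zero_smul g := by show rho 0 g = 0; rw [map_zero]; rfl

theorem single_salg_smul (u : Multiset Y) (r : R) (g : Di Y R) :
    (AddMonoidAlgebra.single u r) • g
      = r • Finsupp.mapDomain (shiftW u) g := by
  show AddMonoidAlgebra.liftNC (↑(Module.toAddMonoidEnd R (Di Y R))) (⇑shiftHom)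
      (AddMonoidAlgebra.single u r) g = _
  rw [AddMonoidAlgebra.liftNC_single]
  rfl

theorem mapDomain_shiftW_eq_pL (u : Multiset Y) (hu : u ≠ 0) (g : Di Y R) :
    Finsupp.mapDomain (shiftW u) g = pL (mono (DiWord.m1 u hu)) g := by
  classical
  rw [pL, mono, Finsupp.sum_single_index (by simp)]
  rw [Finsupp.mapDomain]
  refine Finsupp.sum_congr fun v _ => ?_
  rw [one_mul, shiftW_of_ne _ hu]
  rfl

/-- Transport a left ideal of `Di Y R` to a submodule over the semigroup algebra. -/
noncomputable def liftSub (N : Submodule R (Di Y R))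
    (hN : ∀ f g : Di Y R, g ∈ N → pL f g ∈ N) :
    Submodule (AddMonoidAlgebra R (Multiset Y)) (Di Y R) where
  carrier := N
  add_mem' := fun h1 h2 => N.add_mem h1 h2
  zero_mem' := N.zero_mem
  smul_mem' := by
    intro s g hg
    induction s using AddMonoidAlgebra.induction with
    | zero => rw [zero_smul]; exact N.zero_mem
    | single_add u r f _ _ ih =>
      rw [add_smul]
      refine N.add_mem ?_ ih
      rw [single_salg_smul]
      by_cases hu : u = 0
      · subst hu
        rw [shiftW_zero, Finsupp.mapDomain_id]
        exact N.smul_mem r hg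
      · rw [mapDomain_shiftW_eq_pL u hu]
        exact N.smul_mem r (hN _ _ hg)

theorem mem_span_gens (g : Di Y R) :
    g ∈ Submodule.span (AddMonoidAlgebra R (Multiset Y))
      ((Set.range fun x : Y => (mono (DiWord.mX x) : Di Y R)) ∪
        (Set.range fun p : Y × Y => (mono (DiWord.m2 p.1 p.2) : Di Y R))) := by
  classical
  induction g using Finsupp.induction with
  | zero => exact Submodule.zero_mem _
  | single_add d r f _ _ ih =>
    refine Submodule.add_mem _ ?_ ih
    obtain ⟨hw, hl⟩ := d.2
    rcases hl with h1 | ⟨h2, hc⟩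
    · -- label 1
      obtain ⟨x, hx⟩ := Multiset.exists_mem_of_ne_zero hw
      have hv : d.1.1 = {x} + d.1.1.erase x := by
        rw [Multiset.singleton_add, Multiset.cons_erase hx]
      have key : Finsupp.single d r =
          (AddMonoidAlgebra.single (d.1.1.erase x) r) • (mono (DiWord.mX x) : Di Y R) := by
        rw [single_salg_smul, mono, Finsupp.mapDomain_single, Finsupp.smul_single', mul_one]
        congr 1
        by_cases he : d.1.1.erase x = 0
        · rw [he, shiftW_zero, id_eq]
          exact Subtype.ext (Prod.ext (by rw [hv, he, add_zero]; rfl) h1)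
        · rw [shiftW_of_ne _ he]
          refine Subtype.ext (Prod.ext ?_ h1)
          show d.1.1 = d.1.1.erase x + ({x} : Multiset Y)
          rw [add_comm]
          exact hv
      rw [key]
      exact Submodule.smul_mem _ _ (Submodule.subset_span (Or.inl ⟨x, rfl⟩))
    · -- label 2
      obtain ⟨x, y, hxy⟩ := Multiset.card_eq_two.mp hc
      have hd : d = DiWord.m2 x y := Subtype.ext (Prod.ext hxy h2)
      have key : Finsupp.single d r =
          (AddMonoidAlgebra.single (0 : Multiset Y) r) • (mono (DiWord.m2 x y) : Di Y R) := by
        rw [single_salg_smul, shiftW_zero, Finsupp.mapDomain_id, mono, Finsupp.smul_single',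
          mul_one, hd]
      rw [key]
      exact Submodule.smul_mem _ _ (Submodule.subset_span (Or.inr ⟨(x, y), rfl⟩))

theorem finite_salg [Fintype Y] :
    Module.Finite (AddMonoidAlgebra R (Multiset Y)) (Di Y R) := by
  classical
  refine ⟨⟨(Finset.univ.image fun x : Y => (mono (DiWord.mX x) : Di Y R)) ∪
    (Finset.univ.image fun p : Y × Y => (mono (DiWord.m2 p.1 p.2) : Di Y R)), ?_⟩⟩
  rw [eq_top_iff]
  intro g _
  have hco : (↑((Finset.univ.image fun x : Y => (mono (DiWord.mX x) : Di Y R)) ∪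
      (Finset.univ.image fun p : Y × Y => (mono (DiWord.m2 p.1 p.2) : Di Y R))) : Set (Di Y R)) =
      ((Set.range fun x : Y => (mono (DiWord.mX x) : Di Y R)) ∪
        (Set.range fun p : Y × Y => (mono (DiWord.m2 p.1 p.2) : Di Y R))) := by
    simp [Finset.coe_union, Finset.coe_image, Set.image_univ]
  rw [hco]
  exact mem_span_gens g

end NoetherianAux

/-- If `X` is finite and `R` is a left Noetherian associative ring with unit, then the
polynomial diring `Di_R[X]` is left Noetherian: every ascending chain of left ideals of
`Di_R[X]` (submodules closed under left multiplication by arbitrary elements via both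
operations) stabilizes. -/
theorem diring_left_noetherian {Y R : Type*} [Fintype Y] [Ring R] [IsNoetherianRing R]
    (c : ℕ → Submodule R (Di Y R))
    (hchain : Monotone c)
    (hleft : ∀ (n : ℕ) (f g : Di Y R), g ∈ c n → pL f g ∈ c n ∧ pR f g ∈ c n) :
    ∃ N : ℕ, ∀ m : ℕ, N ≤ m → c m = c N := by
  classical
  haveI hS : IsNoetherianRing (AddMonoidAlgebra R (Multiset Y)) :=
    NCHilbert.noeth_multiset Y
  haveI hF : Module.Finite (AddMonoidAlgebra R (Multiset Y)) (Di Y R) := finite_salg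
  haveI hNoe : IsNoetherian (AddMonoidAlgebra R (Multiset Y)) (Di Y R) :=
    isNoetherian_of_isNoetherianRing_of_finite _ _
  let D : ℕ →o Submodule (AddMonoidAlgebra R (Multiset Y)) (Di Y R) :=
    ⟨fun n => liftSub (c n) (fun f g hg => (hleft n f g hg).1),
      fun a b hab x hx => hchain hab hx⟩
  obtain ⟨N, hN⟩ := monotone_stabilizes_iff_noetherian.mpr inferInstance D
  refine ⟨N, fun m hm => ?_⟩
  have hDm := hN m hm
  have hset : ((c N : Set (Di Y R))) = (c m : Set (Di Y R)) :=
    congrArg (fun W : Submodule (AddMonoidAlgebra R (Multiset Y)) (Di Y R) =>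
      (W : Set (Di Y R))) hDm
  exact SetLike.ext' hset.symm

end CDi
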